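/- Let G be a finite group, H a subgroup of G, and p, q primes. If q divides |H/O_{p',p}(H)| then q divides |G/O_{p',p}(G)|. (The Hawkes graph function is S-closed: H ≤ G implies Γ_H(H) ⊆ Γ_H(G).) -/
import Mathlib


/-- The join of a set of normal subgroups is normal. -/
theorem sSup_normal {G : Type*} [Group G] (S : Set (Subgroup G)) (hS : ∀ N ∈ S, N.Normal) :
    (sSup S).Normal := by
  constructor
  intro n hn g
  rw [sSup_eq_iSup'] at hn ⊢
  refine Subgroup.iSup_induction (C := fun x => g * x * g⁻¹ ∈ ⨆ N : S, (N : Subgroup G))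
    _ hn ?_ ?_ ?_
  · intro N x hx
    exact Subgroup.mem_iSup_of_mem N ((hS N N.2).conj_mem x hx g)
  · simpa using Subgroup.one_mem _
  · intro x y hx hy
    have h : g * (x * y) * g⁻¹ = (g * x * g⁻¹) * (g * y * g⁻¹) := by group
    rw [h]; exact Subgroup.mul_mem _ hx hy

/-- The `p'`-core `O_{p'}(G)`: the largest normal subgroup of `G` of order coprime to `p`,
realized as the join of all normal subgroups of order coprime to `p`. -/
def pPrimeCore (p : ℕ) (G : Type*) [Group G] : Subgroup G :=
  sSup {N : Subgroup G | N.Normal ∧ Nat.Coprime (Nat.card N) p}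

instance pPrimeCore_normal (p : ℕ) (G : Type*) [Group G] : (pPrimeCore p G).Normal :=
  sSup_normal _ fun _ hN => hN.1

/-- The `p`-core `O_p(G)`: the largest normal `p`-subgroup of `G`,
realized as the join of all normal `p`-subgroups. -/
def pCore (p : ℕ) (G : Type*) [Group G] : Subgroup G :=
  sSup {N : Subgroup G | N.Normal ∧ IsPGroup p N}

instance pCore_normal (p : ℕ) (G : Type*) [Group G] : (pCore p G).Normal :=
  sSup_normal _ fun _ hN => hN.1

/-- `O_{p',p}(G)`: the preimage in `G` of `O_p(G / O_{p'}(G))`. -/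
def OpPrimeP (p : ℕ) (G : Type*) [Group G] : Subgroup G :=
  (pCore p (G ⧸ pPrimeCore p G)).comap (QuotientGroup.mk' (pPrimeCore p G))

/-- A Schmidt group: a non-nilpotent group all of whose proper subgroups are nilpotent. -/
def IsSchmidt (G : Type*) [Group G] : Prop :=
  ¬ Group.IsNilpotent G ∧ ∀ H : Subgroup G, H ≠ ⊤ → Group.IsNilpotent H

/-- A Schmidt `(p,q)`-group: a Schmidt group whose order is divisible by exactly the
primes `p` and `q` and whose Sylow `p`-subgroup is normal. -/
def IsSchmidtPQ (p q : ℕ) (G : Type*) [Group G] : Prop :=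
  IsSchmidt G ∧ (Nat.card G).primeFactors = {p, q} ∧ ∃ P : Sylow p G, (P : Subgroup G).Normal


theorem aux_card_sup_dvd {G : Type*} [Group G] [Finite G] (M N : Subgroup G) [N.Normal] :
    Nat.card ↥(M ⊔ N) ∣ Nat.card M * Nat.card N := by
  have h1 : Nat.card ↥(M ⊔ N) =
      Nat.card ((M ⊔ N : Subgroup G) ⧸ N.subgroupOf (M ⊔ N)) *
        Nat.card (N.subgroupOf (M ⊔ N)) :=
    Subgroup.card_eq_card_quotient_mul_card_subgroup _
  have h2 : Nat.card ((M ⊔ N : Subgroup G) ⧸ N.subgroupOf (M ⊔ N)) ∣ Nat.card M := by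
    rw [← Nat.card_congr (QuotientGroup.quotientInfEquivProdNormalQuotient M N).toEquiv]
    exact Subgroup.index_dvd_card _
  have h3 : Nat.card (N.subgroupOf (M ⊔ N)) ∣ Nat.card N := by
    have hmap : Nat.card (N.subgroupOf (M ⊔ N)) =
        Nat.card ((N.subgroupOf (M ⊔ N)).map (M ⊔ N).subtype) :=
      Nat.card_congr (Subgroup.equivMapOfInjective _ _ (M ⊔ N).subtype_injective).toEquiv
    rw [hmap, Subgroup.subgroupOf_map_subtype]
    exact Subgroup.card_dvd_of_le inf_le_left
  rw [h1]; exact mul_dvd_mul h2 h3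

theorem aux_sSup_pred {G : Type*} [Group G] [Finite G] (P : Subgroup G → Prop)
    (hbot : P ⊥)
    (hsup : ∀ M N : Subgroup G, M.Normal → N.Normal → P M → P N → P (M ⊔ N)) :
    P (sSup {N : Subgroup G | N.Normal ∧ P N}) := by
  classical
  set S : Set (Subgroup G) := {N : Subgroup G | N.Normal ∧ P N}
  have hfin : S.Finite := Set.toFinite S
  have hQ : (fun N : Subgroup G => N.Normal ∧ P N) (hfin.toFinset.sup id) := by
    refine Finset.sup_induction (p := fun N : Subgroup G => N.Normal ∧ P N)
      ⟨inferInstance, hbot⟩ ?_ ?_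
    · rintro a ⟨ha1, ha2⟩ b ⟨hb1, hb2⟩
      refine ⟨?_, hsup a b ha1 hb1 ha2 hb2⟩
      have : (sSup {a, b} : Subgroup G).Normal := by
        apply sSup_normal
        rintro N (rfl | rfl) <;> assumption
      rwa [sSup_pair] at this
    · intro b hb
      exact hfin.mem_toFinset.mp hb
  have heq : hfin.toFinset.sup id = sSup S := by
    rw [Finset.sup_id_eq_sSup, hfin.coe_toFinset]
  rw [heq] at hQ
  exact hQ.2

theorem pPrimeCore_card_coprime (p : ℕ) (G : Type*) [Group G] [Finite G] :
    Nat.Coprime (Nat.card (pPrimeCore p G)) p := by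
  refine aux_sSup_pred (fun N : Subgroup G => Nat.Coprime (Nat.card N) p) ?_ ?_
  · simp [Nat.card_eq_fintype_card]
  · intro M N hM hN hMc hNc
    exact Nat.Coprime.coprime_dvd_left (aux_card_sup_dvd M N) (hMc.mul hNc)

theorem pCore_isPGroup (p : ℕ) (G : Type*) [Group G] [Finite G] :
    IsPGroup p (pCore p G) := by
  refine aux_sSup_pred (fun N : Subgroup G => IsPGroup p N) IsPGroup.of_bot ?_
  intro M N hM hN hMp hNp
  exact hMp.to_sup_of_normal_right hNp

theorem subgroupOf_OpPrimeP_le {G : Type*} [Group G] [Finite G] (H : Subgroup G) (p : ℕ) :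
    (OpPrimeP p G).subgroupOf H ≤ OpPrimeP p H := by
  haveI : (OpPrimeP p G).Normal := Subgroup.normal_comap _
  set O : Subgroup G := pPrimeCore p G with hO
  -- the intersection of the p'-core of G with H lies in the p'-core of H
  have hOH : O.subgroupOf H ≤ pPrimeCore p H := by
    apply le_sSup
    refine ⟨Subgroup.normal_subgroupOf, ?_⟩
    have hdvd : Nat.card (O.subgroupOf H) ∣ Nat.card O := by
      have hmap : Nat.card (O.subgroupOf H) =
          Nat.card ((O.subgroupOf H).map H.subtype) :=
        Nat.card_congr (Subgroup.equivMapOfInjective _ _ H.subtype_injective).toEquiv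
      rw [hmap, Subgroup.subgroupOf_map_subtype]
      exact Subgroup.card_dvd_of_le inf_le_left
    exact Nat.Coprime.coprime_dvd_left hdvd (pPrimeCore_card_coprime p G)
  intro n hn
  -- it suffices that the image of `(OpPrimeP p G).subgroupOf H` in `H ⧸ pPrimeCore p H`
  -- is a normal p-subgroup
  have hmem : QuotientGroup.mk' (pPrimeCore p H) n ∈
      ((OpPrimeP p G).subgroupOf H).map (QuotientGroup.mk' (pPrimeCore p H)) :=
    Subgroup.mem_map_of_mem _ hn
  have hle : ((OpPrimeP p G).subgroupOf H).map (QuotientGroup.mk' (pPrimeCore p H)) ≤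
      pCore p (H ⧸ pPrimeCore p H) := by
    apply le_sSup
    constructor
    · exact Subgroup.Normal.map Subgroup.normal_subgroupOf _
        (QuotientGroup.mk'_surjective _)
    · rintro ⟨x, hx⟩
      obtain ⟨m, hm, rfl⟩ := hx
      -- m : H with ↑m ∈ OpPrimeP p G
      have hm' : QuotientGroup.mk' O (m : G) ∈ pCore p (G ⧸ O) := hm
      obtain ⟨k, hk⟩ := pCore_isPGroup p (G ⧸ O) ⟨_, hm'⟩
      have hk' : (QuotientGroup.mk' O (m : G)) ^ p ^ k = 1 := by
        simpa [Subtype.ext_iff] using hk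
      have hmO : ((m : G)) ^ p ^ k ∈ O := by
        rwa [← map_pow, QuotientGroup.mk'_apply, QuotientGroup.eq_one_iff] at hk'
      have hmH : m ^ p ^ k ∈ O.subgroupOf H := by
        rw [Subgroup.mem_subgroupOf]
        simpa using hmO
      refine ⟨k, ?_⟩
      have : m ^ p ^ k ∈ pPrimeCore p H := hOH hmH
      rw [Subtype.ext_iff]
      show (QuotientGroup.mk' (pPrimeCore p H) m) ^ p ^ k = 1
      rw [← map_pow, QuotientGroup.mk'_apply, QuotientGroup.eq_one_iff]
      exact this
  exact hle hmem

/-- The Hawkes graph function is `S`-closed: for a subgroup `H ≤ G`, if `q` divides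
`|H / O_{p',p}(H)|` then `q` divides `|G / O_{p',p}(G)|`. -/
theorem hawkes_S_closed {G : Type*} [Group G] [Finite G] (H : Subgroup G) {p q : ℕ}
    (hp : p.Prime) (hq : q.Prime)
    (h : q ∣ Nat.card (H ⧸ OpPrimeP p H)) :
    q ∣ Nat.card (G ⧸ OpPrimeP p G) := by
  classical
  have hKnorm : (OpPrimeP p G).Normal := Subgroup.normal_comap _
  have key : (OpPrimeP p G).subgroupOf H ≤ OpPrimeP p H := subgroupOf_OpPrimeP_le H p
  have h1 : (OpPrimeP p H).index ∣ ((OpPrimeP p G).subgroupOf H).index :=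
    Subgroup.index_dvd_of_le key
  have h2 : ((OpPrimeP p G).subgroupOf H).index = (OpPrimeP p G).relIndex H := rfl
  have h3 : (OpPrimeP p G).relIndex H ∣ (OpPrimeP p G).index :=
    Subgroup.relIndex_dvd_index_of_normal _ _
  rw [h2] at h1
  have h4 : (OpPrimeP p H).index ∣ (OpPrimeP p G).index := h1.trans h3
  exact h.trans h4
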